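/- Suppose that to every α-Hölder function g: Ω → ℝ there are assigned λ_g > 0 and a strictly positive α-Hölder function h_g with L_g h_g = λ_g h_g, and define h^v(μ) = inf over all α-Hölder g of { −∫_Ω g dμ + log λ_g }. Then h^v is affine on the set of shift-invariant Borel probability measures: for all shift-invariant Borel probability measures μ, ν and all t ∈ [0,1], h^v(tμ + (1−t)ν) = t·h^v(μ) + (1−t)·h^v(ν) (in [−∞,0], with the conventions of extended-real arithmetic). -/

import Mathlib

open MeasureTheory Filter
open scoped Classical
set_option linter.unusedSectionVars false

noncomputable section

namespace Paper

variable {A : Type*} [MetricSpace A] [CompactSpace A] [MeasurableSpace A] [BorelSpace A]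

/-- The left shift `σ` on `Ω = Aᴺ`. -/
def shift (x : ℕ → A) : ℕ → A := fun n => x (n + 1)

/-- Prepend a symbol: `cons a x = (a, x₀, x₁, …)`. -/
def cons (a : A) (x : ℕ → A) : ℕ → A := fun n =>
  match n with
  | 0 => a
  | n + 1 => x n

/-- The metric `d_Ω` on `Ω`. -/
def dOmega (x y : ℕ → A) : ℝ :=
  ∑' n : ℕ, (1 / 2 : ℝ) ^ (n + 1) * (dist (x n) (y n) / (1 + dist (x n) (y n)))

/-- `f` is `α`-Hölder with respect to `d_Ω`. -/
def IsHolder (α : ℝ) (f : (ℕ → A) → ℝ) : Prop :=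
  ∃ C : ℝ, 0 ≤ C ∧ ∀ x y, |f x - f y| ≤ C * dOmega x y ^ α

/-- The Ruelle transfer operator with a priori measure `p`. -/
def ruelle (p : Measure A) (f φ : (ℕ → A) → ℝ) : (ℕ → A) → ℝ :=
  fun x => ∫ a, Real.exp (f (cons a x)) * φ (cons a x) ∂p

/-- The normalized potential `f̄ = f + log h - log (h ∘ σ) - log λ`. -/
def fbar (f h : (ℕ → A) → ℝ) (lam : ℝ) : (ℕ → A) → ℝ :=
  fun x => f x + Real.log (h x) - Real.log (h (shift x)) - Real.log lam

/-- Projection on the first `n` coordinates. -/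
def proj (n : ℕ) (x : ℕ → A) : Fin n → A := fun i => x i

/-- Relative entropy `H(μ|ν)` of two measures, with value `+∞` unless
`μ ≪ ν` and the entropy integral is finite. -/
def relEnt {X : Type*} [MeasurableSpace X] (μ ν : Measure X) : EReal :=
  if μ ≪ ν ∧ Integrable (fun x => Real.log (μ.rnDeriv ν x).toReal) μ then
    ((∫ x, Real.log (μ.rnDeriv ν x).toReal ∂μ : ℝ) : EReal)
  else ⊤

/-- Relative entropy `H_{Λ_n}(μ|ν)` on the σ-algebra of the first `n` coordinates. -/
def relEntN (n : ℕ) (μ ν : Measure (ℕ → A)) : EReal :=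
  relEnt (μ.map (proj n)) (ν.map (proj n))

/-- The entropy `H_{Λ_n}(μ) = -H_{Λ_n}(μ | pᴺ)` relative to the a priori measure `p`. -/
def finEnt (p : Measure A) (μ : Measure (ℕ → A)) (n : ℕ) : EReal :=
  - relEnt (μ.map (proj n)) (Measure.pi fun _ : Fin n => p)

/-- The specific entropy `h^s(μ) = lim_n H_{Λ_n}(μ)/n` (defined as a `limsup`,
which coincides with the limit whenever the latter exists). -/
def specEnt (p : Measure A) (μ : Measure (ℕ → A)) : EReal :=
  Filter.atTop.limsup fun n : ℕ => ((n : ℝ)⁻¹ : EReal) * finEnt p μ n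

/-- Birkhoff sum `S_n(f)`. -/
def birkhoff (n : ℕ) (f : (ℕ → A) → ℝ) (x : ℕ → A) : ℝ :=
  ∑ i ∈ Finset.range n, f (shift^[i] x)

/-- The configuration `x_{Λ_n} y_{Λ_n^c}`. -/
def concatAt (n : ℕ) (x y : ℕ → A) : ℕ → A := fun i => if i < n then x i else y i

/-- Concatenation of a finite word with a configuration. -/
def wordCons (n : ℕ) (a : Fin n → A) (x : ℕ → A) : ℕ → A :=
  fun i => if h : i < n then a ⟨i, h⟩ else x (i - n)

/-- The entropy `h^v(μ) = inf_g { -∫ g dμ + log λ_g }`, the infimum being taken over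
all `α`-Hölder potentials `g`, where `λ_g` is the maximal eigenvalue of `L_g`. -/
def hvEnt (α : ℝ) (lam : ((ℕ → A) → ℝ) → ℝ) (μ : Measure (ℕ → A)) : EReal :=
  sInf {c : EReal | ∃ g : (ℕ → A) → ℝ, IsHolder α g ∧
    c = ((-∫ x, g x ∂μ + Real.log (lam g) : ℝ) : EReal)}

/-! ### basic facts about `dOmega` -/

lemma term_nonneg (x y : ℕ → A) (n : ℕ) :
    0 ≤ (1 / 2 : ℝ) ^ (n + 1) * (dist (x n) (y n) / (1 + dist (x n) (y n))) := by
  positivity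

lemma term_le (x y : ℕ → A) (n : ℕ) :
    (1 / 2 : ℝ) ^ (n + 1) * (dist (x n) (y n) / (1 + dist (x n) (y n))) ≤ (1 / 2 : ℝ) ^ (n + 1) := by
  have h1 : dist (x n) (y n) / (1 + dist (x n) (y n)) ≤ 1 := by
    rw [div_le_one (by positivity)]; linarith [dist_nonneg (x := x n) (y := y n)]
  nlinarith [pow_pos (by norm_num : (0:ℝ) < 1/2) (n+1)]

lemma summable_term (x y : ℕ → A) :
    Summable (fun n : ℕ => (1 / 2 : ℝ) ^ (n + 1) * (dist (x n) (y n) / (1 + dist (x n) (y n)))) := by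
  apply Summable.of_nonneg_of_le (term_nonneg x y) (term_le x y)
  exact (summable_geometric_of_lt_one (by norm_num) (by norm_num)).comp_injective
    (add_left_injective 1)

lemma dOmega_nonneg (x y : ℕ → A) : 0 ≤ dOmega x y :=
  tsum_nonneg (term_nonneg x y)

lemma dOmega_le_one (x y : ℕ → A) : dOmega x y ≤ 1 := by
  have h := Summable.tsum_le_tsum (term_le x y) (summable_term x y)
    ((summable_geometric_of_lt_one (by norm_num) (by norm_num)).comp_injective
      (add_left_injective 1))
  refine h.trans ?_
  have : ∑' n : ℕ, ((1:ℝ)/2) ^ (n + 1) = 1 := by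
    have h2 : ∑' n : ℕ, ((1:ℝ)/2) ^ (n + 1) = (∑' n : ℕ, ((1:ℝ)/2) ^ n) * (1/2) := by
      rw [← tsum_mul_right]; exact tsum_congr fun n => pow_succ _ _
    rw [h2, tsum_geometric_of_lt_one (by norm_num) (by norm_num)]; norm_num
  exact le_of_eq this

lemma dOmega_self (x : ℕ → A) : dOmega x x = 0 := by
  simp [dOmega]

lemma continuous_dOmega : Continuous (fun z : (ℕ → A) × (ℕ → A) => dOmega z.1 z.2) := by
  apply continuous_tsum (u := fun n : ℕ => (1/2:ℝ)^(n+1))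
  · intro n
    have h1 : Continuous fun z : (ℕ → A) × (ℕ → A) => dist (z.1 n) (z.2 n) :=
      Continuous.dist ((continuous_apply n).comp continuous_fst)
        ((continuous_apply n).comp continuous_snd)
    exact continuous_const.mul (h1.div (continuous_const.add h1) (fun z => by positivity))
  · exact (summable_geometric_of_lt_one (by norm_num) (by norm_num)).comp_injective
      (add_left_injective 1)
  · intro n z
    rw [Real.norm_eq_abs, abs_of_nonneg (term_nonneg z.1 z.2 n)]
    exact term_le z.1 z.2 n

lemma IsHolder.continuous {α : ℝ} (hα : 0 < α) {f : (ℕ → A) → ℝ} (hf : IsHolder α f) :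
    Continuous f := by
  obtain ⟨C, hC, hCf⟩ := hf
  rw [continuous_iff_continuousAt]
  intro x
  rw [ContinuousAt, tendsto_iff_dist_tendsto_zero]
  have hd : Tendsto (fun y => dOmega y x) (nhds x) (nhds 0) := by
    have h1 : Tendsto (fun y => (y, x)) (nhds x) (nhds (x, x)) :=
      Tendsto.prodMk_nhds tendsto_id tendsto_const_nhds
    have := (continuous_dOmega.tendsto (x, x)).comp h1
    simpa [dOmega_self, Function.comp_def] using this
  have hd2 : Tendsto (fun y => C * dOmega y x ^ α) (nhds x) (nhds 0) := by
    have h2 : Tendsto (fun y => dOmega y x ^ α) (nhds x) (nhds 0) := by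
      have h3 : ContinuousAt (fun r : ℝ => r ^ α) 0 :=
        Real.continuousAt_rpow_const 0 α (Or.inr hα.le)
      have := (h3.tendsto).comp hd
      simpa [Real.zero_rpow hα.ne', Function.comp_def] using this
    simpa using h2.const_mul C
  refine squeeze_zero (fun y => dist_nonneg) (fun y => ?_) hd2
  rw [Real.dist_eq]
  exact hCf y x

/-! ### shift, cons -/

lemma shift_cons (a : A) (x : ℕ → A) : shift (cons a x) = x := rfl

lemma dOmega_shift_le (x y : ℕ → A) : dOmega (shift x) (shift y) ≤ 2 * dOmega x y := by
  have key : dOmega (shift x) (shift y)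
      = 2 * ∑' n : ℕ, (1/2:ℝ) ^ (n + 1 + 1) * (dist (x (n+1)) (y (n+1)) / (1 + dist (x (n+1)) (y (n+1)))) := by
    rw [← tsum_mul_left]
    refine tsum_congr fun n => ?_
    show (1/2:ℝ) ^ (n+1) * (dist (x (n+1)) (y (n+1)) / (1 + dist (x (n+1)) (y (n+1)))) = _
    ring
  rw [key]
  have h2 : ∑' n : ℕ, (1/2:ℝ) ^ (n + 1 + 1) * (dist (x (n+1)) (y (n+1)) / (1 + dist (x (n+1)) (y (n+1))))
      ≤ dOmega x y := by
    have hs : Summable (fun n : ℕ => (1/2:ℝ) ^ (n + 1) * (dist (x n) (y n) / (1 + dist (x n) (y n)))) :=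
      summable_term x y
    have := (summable_nat_add_iff 1).mpr hs
    calc ∑' n : ℕ, (1/2:ℝ) ^ (n + 1 + 1) * (dist (x (n+1)) (y (n+1)) / (1 + dist (x (n+1)) (y (n+1))))
        ≤ (1/2:ℝ)^(0+1) * (dist (x 0) (y 0) / (1 + dist (x 0) (y 0)))
          + ∑' n : ℕ, (1/2:ℝ) ^ (n + 1 + 1) * (dist (x (n+1)) (y (n+1)) / (1 + dist (x (n+1)) (y (n+1)))) := by
          have := term_nonneg x y 0
          linarith
      _ = dOmega x y := (Summable.tsum_eq_zero_add hs).symm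
  linarith

/-! ### Hölder algebra -/

variable {α : ℝ}

lemma IsHolder.add {f g : (ℕ → A) → ℝ} (hf : IsHolder α f) (hg : IsHolder α g) :
    IsHolder α (fun x => f x + g x) := by
  obtain ⟨C, hC, hCf⟩ := hf
  obtain ⟨D, hD, hDf⟩ := hg
  refine ⟨C + D, by linarith, fun x y => ?_⟩
  calc |f x + g x - (f y + g y)| ≤ |f x - f y| + |g x - g y| := by
        rw [show f x + g x - (f y + g y) = (f x - f y) + (g x - g y) by ring]
        exact abs_add_le _ _
    _ ≤ C * dOmega x y ^ α + D * dOmega x y ^ α := add_le_add (hCf x y) (hDf x y)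
    _ = (C + D) * dOmega x y ^ α := by ring

lemma IsHolder.const (c : ℝ) : IsHolder α (fun _ : ℕ → A => c) :=
  ⟨0, le_refl 0, fun x y => by simp⟩

lemma IsHolder.mul_const {f : (ℕ → A) → ℝ} (hf : IsHolder α f) (c : ℝ) :
    IsHolder α (fun x => c * f x) := by
  obtain ⟨C, hC, hCf⟩ := hf
  refine ⟨|c| * C, by positivity, fun x y => ?_⟩
  rw [show c * f x - c * f y = c * (f x - f y) by ring, abs_mul, mul_assoc]
  exact mul_le_mul_of_nonneg_left (hCf x y) (abs_nonneg c)

lemma IsHolder.neg {f : (ℕ → A) → ℝ} (hf : IsHolder α f) : IsHolder α (fun x => - f x) := by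
  have := hf.mul_const (-1); simpa using this

lemma IsHolder.sub {f g : (ℕ → A) → ℝ} (hf : IsHolder α f) (hg : IsHolder α g) :
    IsHolder α (fun x => f x - g x) := by
  have := hf.add hg.neg; simpa [sub_eq_add_neg] using this

lemma IsHolder.comp_shift (hα0 : 0 ≤ α) (hα1 : α ≤ 1) {f : (ℕ → A) → ℝ} (hf : IsHolder α f) :
    IsHolder α (fun x => f (shift x)) := by
  obtain ⟨C, hC, hCf⟩ := hf
  refine ⟨C * 2, by linarith, fun x y => ?_⟩
  calc |f (shift x) - f (shift y)| ≤ C * dOmega (shift x) (shift y) ^ α := hCf _ _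
    _ ≤ C * (2 * dOmega x y) ^ α := by
        apply mul_le_mul_of_nonneg_left _ hC
        exact Real.rpow_le_rpow (dOmega_nonneg _ _) (dOmega_shift_le x y) hα0
    _ ≤ C * (2 * dOmega x y ^ α) := by
        apply mul_le_mul_of_nonneg_left _ hC
        rw [Real.mul_rpow (by norm_num) (dOmega_nonneg x y)]
        apply mul_le_mul_of_nonneg_right _ (Real.rpow_nonneg (dOmega_nonneg x y) α)
        calc (2:ℝ) ^ α ≤ 2 ^ (1:ℝ) :=
              Real.rpow_le_rpow_of_exponent_le (by norm_num) hα1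
          _ = 2 := by norm_num
    _ = C * 2 * dOmega x y ^ α := by ring

lemma IsHolder.comp_iterate (hα0 : 0 ≤ α) (hα1 : α ≤ 1) {f : (ℕ → A) → ℝ} (hf : IsHolder α f)
    (i : ℕ) : IsHolder α (fun x => f (shift^[i] x)) := by
  induction i with
  | zero => simpa using hf
  | succ i ih =>
      have h := ih.comp_shift hα0 hα1
      have : (fun x => f (shift^[i+1] x)) = fun x => f (shift^[i] (shift x)) := by
        funext x; rw [Function.iterate_succ_apply]
      rw [this]; exact h

lemma IsHolder.finset_sum {ι : Type*} (s : Finset ι) (f : ι → (ℕ → A) → ℝ)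
    (h : ∀ i ∈ s, IsHolder α (f i)) : IsHolder α (fun x => ∑ i ∈ s, f i x) := by
  classical
  induction s using Finset.induction with
  | empty => simpa using IsHolder.const 0
  | insert a s hi ih =>
      rw [show (fun x => ∑ i ∈ insert a s, f i x) = fun x => f a x + ∑ i ∈ s, f i x by
        funext x; rw [Finset.sum_insert hi]]
      exact (h a (Finset.mem_insert_self a s)).add
        (ih fun i his => h i (Finset.mem_insert_of_mem his))

lemma IsHolder.birkhoff (hα0 : 0 ≤ α) (hα1 : α ≤ 1) {f : (ℕ → A) → ℝ} (hf : IsHolder α f) (n : ℕ) :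
    IsHolder α (birkhoff n f) :=
  IsHolder.finset_sum _ _ (fun i _ => hf.comp_iterate hα0 hα1 i)

/-! ### logarithmic combination -/

lemma logsum_sub_le {t s : ℝ} (ht : 0 < t) (hs : 0 < s) (a b a' b' : ℝ) :
    Real.log (t * Real.exp a + s * Real.exp b) - Real.log (t * Real.exp a' + s * Real.exp b')
      ≤ |a - a'| + |b - b'| := by
  have h1 : t * Real.exp a + s * Real.exp b
      ≤ Real.exp (|a - a'| + |b - b'|) * (t * Real.exp a' + s * Real.exp b') := by
    have ha : Real.exp a ≤ Real.exp (|a - a'| + |b - b'|) * Real.exp a' := by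
      rw [← Real.exp_add]
      apply Real.exp_le_exp.mpr
      have := le_abs_self (a - a'); have := abs_nonneg (b - b'); linarith
    have hb : Real.exp b ≤ Real.exp (|a - a'| + |b - b'|) * Real.exp b' := by
      rw [← Real.exp_add]
      apply Real.exp_le_exp.mpr
      have := le_abs_self (b - b'); have := abs_nonneg (a - a'); linarith
    nlinarith [Real.exp_pos a, Real.exp_pos b]
  have h2 : Real.log (t * Real.exp a + s * Real.exp b)
      ≤ Real.log (Real.exp (|a - a'| + |b - b'|) * (t * Real.exp a' + s * Real.exp b')) :=
    Real.log_le_log (by positivity) h1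
  rw [Real.log_mul (Real.exp_ne_zero _) (by positivity), Real.log_exp] at h2
  linarith

lemma abs_logsum_le {t s : ℝ} (ht : 0 < t) (hs : 0 < s) (a b a' b' : ℝ) :
    |Real.log (t * Real.exp a + s * Real.exp b) - Real.log (t * Real.exp a' + s * Real.exp b')|
      ≤ |a - a'| + |b - b'| := by
  rw [abs_sub_le_iff]
  constructor
  · exact logsum_sub_le ht hs a b a' b'
  · have := logsum_sub_le ht hs a' b' a b
    rw [abs_sub_comm a' a, abs_sub_comm b' b] at this
    linarith

lemma IsHolder.log_comb {t s : ℝ} (ht : 0 < t) (hs : 0 < s) {u v : (ℕ → A) → ℝ}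
    (hu : IsHolder α u) (hv : IsHolder α v) :
    IsHolder α (fun x => Real.log (t * Real.exp (u x) + s * Real.exp (v x))) := by
  obtain ⟨C, hC, hCf⟩ := hu
  obtain ⟨D, hD, hDf⟩ := hv
  refine ⟨C + D, by linarith, fun x y => ?_⟩
  calc |Real.log (t * Real.exp (u x) + s * Real.exp (v x))
        - Real.log (t * Real.exp (u y) + s * Real.exp (v y))|
      ≤ |u x - u y| + |v x - v y| := abs_logsum_le ht hs _ _ _ _
    _ ≤ C * dOmega x y ^ α + D * dOmega x y ^ α := add_le_add (hCf x y) (hDf x y)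
    _ = (C + D) * dOmega x y ^ α := by ring

lemma IsHolder.log_of_pos {h : (ℕ → A) → ℝ} {m : ℝ} (hm : 0 < m) (hml : ∀ x, m ≤ h x)
    (hh : IsHolder α h) : IsHolder α (fun x => Real.log (h x)) := by
  obtain ⟨C, hC, hCf⟩ := hh
  refine ⟨C / m, by positivity, fun x y => ?_⟩
  have key : ∀ z w : (ℕ → A), Real.log (h z) - Real.log (h w) ≤ |h z - h w| / m := by
    intro z w
    have hz : 0 < h z := lt_of_lt_of_le hm (hml z)
    have hw : 0 < h w := lt_of_lt_of_le hm (hml w)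
    have h1 : Real.log (h z) - Real.log (h w) = Real.log (h z / h w) := by
      rw [Real.log_div hz.ne' hw.ne']
    rw [h1]
    have h2 : Real.log (h z / h w) ≤ h z / h w - 1 :=
      Real.log_le_sub_one_of_pos (by positivity)
    have h3 : h z / h w - 1 = (h z - h w) / h w := by field_simp
    have h4 : (h z - h w) / h w ≤ |h z - h w| / m := by
      rcases le_or_gt (h z - h w) 0 with hc | hc
      · have h5 : (h z - h w) / h w ≤ 0 := div_nonpos_of_nonpos_of_nonneg hc hw.le
        have h6 : (0:ℝ) ≤ |h z - h w| / m := by positivity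
        linarith
      · calc (h z - h w) / h w ≤ (h z - h w) / m := by gcongr; exact hml w
          _ ≤ |h z - h w| / m := by gcongr; exact le_abs_self _
    linarith
  have habs : |Real.log (h x) - Real.log (h y)| ≤ |h x - h y| / m := by
    rw [abs_sub_le_iff]
    exact ⟨(key x y).trans (le_refl _), (key y x).trans (by rw [abs_sub_comm])⟩
  calc |Real.log (h x) - Real.log (h y)| ≤ |h x - h y| / m := habs
    _ ≤ C * dOmega x y ^ α / m := by
        gcongr
        exact hCf x y
    _ = C / m * dOmega x y ^ α := by ring

/-! ### compactness and integrability helpers -/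

lemma nonempty_of_prob (p : Measure A) [IsProbabilityMeasure p] : Nonempty A := by
  by_contra h
  rw [not_nonempty_iff] at h
  have h0 : p Set.univ = 0 := by
    rw [Set.univ_eq_empty_iff.mpr h]; exact measure_empty
  rw [measure_univ] at h0
  exact one_ne_zero h0

lemma exists_min (f : (ℕ → A) → ℝ) (hf : Continuous f) [Nonempty A] :
    ∃ z, ∀ x, f z ≤ f x := by
  obtain ⟨z, _, hz⟩ := isCompact_univ.exists_isMinOn (Set.univ_nonempty) hf.continuousOn
  exact ⟨z, fun x => hz (Set.mem_univ x)⟩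

lemma exists_max (f : (ℕ → A) → ℝ) (hf : Continuous f) [Nonempty A] :
    ∃ z, ∀ x, f x ≤ f z := by
  obtain ⟨z, _, hz⟩ := isCompact_univ.exists_isMaxOn (Set.univ_nonempty) hf.continuousOn
  exact ⟨z, fun x => hz (Set.mem_univ x)⟩

lemma continuous_cons (x : ℕ → A) : Continuous (fun a : A => cons a x) := by
  apply continuous_pi
  intro n
  match n with
  | 0 => exact continuous_id
  | n + 1 => exact continuous_const

lemma cont_integrable_Omega (f : (ℕ → A) → ℝ) (hf : Continuous f)
    (μ : Measure (ℕ → A)) [IsFiniteMeasure μ] : Integrable f μ :=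
  hf.integrable_of_hasCompactSupport (HasCompactSupport.of_compactSpace f)

lemma cont_integrable_A (f : A → ℝ) (hf : Continuous f)
    (p : Measure A) [IsFiniteMeasure p] : Integrable f p :=
  hf.integrable_of_hasCompactSupport (HasCompactSupport.of_compactSpace f)

/-! ### Birkhoff sums and invariance -/

lemma continuous_shift : Continuous (shift : (ℕ → A) → (ℕ → A)) :=
  continuous_pi fun n => continuous_apply (n + 1)

lemma birkhoff_succ_cons (r : ℕ) (f : (ℕ → A) → ℝ) (a : A) (x : ℕ → A) :
    birkhoff (r + 1) f (cons a x) = f (cons a x) + birkhoff r f x := by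
  unfold birkhoff
  rw [Finset.sum_range_succ']
  have h1 : ∀ i, shift^[i + 1] (cons a x) = shift^[i] x := by
    intro i; rw [Function.iterate_succ_apply, shift_cons]
  simp only [h1, Function.iterate_zero_apply]
  ring

lemma integral_comp_shift (μ : Measure (ℕ → A)) (hinv : μ.map shift = μ)
    (f : (ℕ → A) → ℝ) (hf : Continuous f) :
    ∫ x, f (shift x) ∂μ = ∫ x, f x ∂μ := by
  conv_rhs => rw [← hinv]
  rw [integral_map continuous_shift.aemeasurable hf.aestronglyMeasurable]

lemma integral_comp_iterate (μ : Measure (ℕ → A)) (hinv : μ.map shift = μ)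
    (f : (ℕ → A) → ℝ) (hf : Continuous f) (i : ℕ) :
    ∫ x, f (shift^[i] x) ∂μ = ∫ x, f x ∂μ := by
  induction i with
  | zero => simp
  | succ i ih =>
      have h1 : ∀ x, f (shift^[i+1] x) = (fun y => f (shift^[i] y)) (shift x) := by
        intro x; rw [Function.iterate_succ_apply]
      simp only [h1]
      exact (integral_comp_shift μ hinv (fun y => f (shift^[i] y))
        (hf.comp (continuous_shift.iterate i))).trans ih

lemma integral_birkhoff (μ : Measure (ℕ → A)) [IsFiniteMeasure μ] (hinv : μ.map shift = μ)
    (f : (ℕ → A) → ℝ) (hf : Continuous f) (n : ℕ) :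
    ∫ x, birkhoff n f x ∂μ = n * ∫ x, f x ∂μ := by
  unfold birkhoff
  rw [integral_finset_sum]
  · rw [Finset.sum_congr rfl (fun i _ => integral_comp_iterate μ hinv f hf i)]
    simp [Finset.sum_const, nsmul_eq_mul]
  · intro i _
    exact cont_integrable_Omega _ (hf.comp (continuous_shift.iterate i)) μ

/-! ### normalization -/

lemma normalized_potential
    (p : Measure A) [IsProbabilityMeasure p] (hα0 : 0 < α) (hα1 : α < 1)
    (lam : ((ℕ → A) → ℝ) → ℝ) (eigf : ((ℕ → A) → ℝ) → ((ℕ → A) → ℝ))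
    (hlamg : 0 < lam g) (hg : IsHolder α g)
    (hh : IsHolder α (eigf g)) (hpos : ∀ x, 0 < eigf g x)
    (heq : ∀ x, ruelle p g (eigf g) x = lam g * eigf g x) [Nonempty A] :
    ∃ g' : (ℕ → A) → ℝ, IsHolder α g' ∧
      (∀ x, ∫ a, Real.exp (g' (cons a x)) ∂p = 1) ∧
      (∀ μ : Measure (ℕ → A), IsProbabilityMeasure μ → μ.map shift = μ →
        ∫ x, g' x ∂μ = ∫ x, g x ∂μ - Real.log (lam g)) := by
  set h := eigf g with hh_def
  have hcont : Continuous h := hh.continuous hα0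
  obtain ⟨z, hz⟩ := exists_min h hcont
  have hm : 0 < h z := hpos z
  have hlog : IsHolder α (fun x => Real.log (h x)) := IsHolder.log_of_pos hm hz hh
  have hlogcont : Continuous (fun x => Real.log (h x)) := hlog.continuous hα0
  refine ⟨fbar g h (lam g), ?_, ?_, ?_⟩
  · unfold fbar
    exact ((hg.add hlog).sub (hlog.comp_shift hα0.le hα1.le)).sub (IsHolder.const _)
  · intro x
    have hrw : (fun a => Real.exp (fbar g h (lam g) (cons a x)))
        = fun a => (Real.exp (g (cons a x)) * h (cons a x)) * ((h x)⁻¹ * (lam g)⁻¹) := by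
      funext a
      show Real.exp (g (cons a x) + Real.log (h (cons a x))
        - Real.log (h (shift (cons a x))) - Real.log (lam g)) = _
      rw [shift_cons, Real.exp_sub, Real.exp_sub, Real.exp_add, Real.exp_log (hpos _),
        Real.exp_log (hpos x), Real.exp_log hlamg]
      field_simp
    rw [hrw, integral_mul_const]
    have hR := heq x
    unfold ruelle at hR
    rw [hR]
    have h1 : h x ≠ 0 := (hpos x).ne'
    have h2 : lam g ≠ 0 := hlamg.ne'
    field_simp
  · intro μ hP hinv
    haveI := hP
    unfold fbar
    rw [integral_sub, integral_sub, integral_add]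
    · rw [integral_comp_shift μ hinv _ hlogcont]
      rw [integral_const]
      simp [measure_univ]
    · exact cont_integrable_Omega _ (hg.continuous hα0) μ
    · exact cont_integrable_Omega _ hlogcont μ
    · exact (cont_integrable_Omega _ (hg.continuous hα0) μ).add
        (cont_integrable_Omega _ hlogcont μ)
    · exact cont_integrable_Omega _ (hlogcont.comp continuous_shift) μ
    · exact ((cont_integrable_Omega _ (hg.continuous hα0) μ).add
        (cont_integrable_Omega _ hlogcont μ)).sub
        (cont_integrable_Omega _ (hlogcont.comp continuous_shift) μ)
    · exact integrable_const _

/-! ### the interpolation function W -/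

def Wfun (t s : ℝ) (g₁ g₂ : (ℕ → A) → ℝ) (r : ℕ) (x : ℕ → A) : ℝ :=
  t * Real.exp (birkhoff r g₁ x) + s * Real.exp (birkhoff r g₂ x)

lemma Wfun_pos {t s : ℝ} (ht : 0 < t) (hs : 0 < s) (g₁ g₂ : (ℕ → A) → ℝ) (r : ℕ)
    (x : ℕ → A) : 0 < Wfun t s g₁ g₂ r x := by
  unfold Wfun; positivity

lemma Wfun_zero {t s : ℝ} (hts : t + s = 1) (g₁ g₂ : (ℕ → A) → ℝ) (x : ℕ → A) :
    Wfun t s g₁ g₂ 0 x = 1 := by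
  simp [Wfun, birkhoff, hts]

lemma continuous_birkhoff {f : (ℕ → A) → ℝ} (hf : Continuous f) (n : ℕ) :
    Continuous (birkhoff n f) := by
  unfold birkhoff
  exact continuous_finset_sum _ fun i _ => hf.comp (continuous_shift.iterate i)

lemma continuous_Wfun {t s : ℝ} {g₁ g₂ : (ℕ → A) → ℝ} (h₁ : Continuous g₁)
    (h₂ : Continuous g₂) (r : ℕ) : Continuous (Wfun t s g₁ g₂ r) := by
  unfold Wfun
  exact ((continuous_const.mul (continuous_birkhoff h₁ r).rexp).add
    (continuous_const.mul (continuous_birkhoff h₂ r).rexp))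

lemma Wfun_rec (p : Measure A) [IsProbabilityMeasure p] {t s : ℝ}
    {g₁ g₂ : (ℕ → A) → ℝ} (h₁ : Continuous g₁) (h₂ : Continuous g₂)
    (hn₁ : ∀ x, ∫ a, Real.exp (g₁ (cons a x)) ∂p = 1)
    (hn₂ : ∀ x, ∫ a, Real.exp (g₂ (cons a x)) ∂p = 1)
    (r : ℕ) (x : ℕ → A) :
    ∫ a, Wfun t s g₁ g₂ (r + 1) (cons a x) ∂p = Wfun t s g₁ g₂ r x := by
  have hrw : (fun a => Wfun t s g₁ g₂ (r + 1) (cons a x))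
      = fun a => (t * Real.exp (birkhoff r g₁ x)) * Real.exp (g₁ (cons a x))
        + (s * Real.exp (birkhoff r g₂ x)) * Real.exp (g₂ (cons a x)) := by
    funext a
    unfold Wfun
    rw [birkhoff_succ_cons, birkhoff_succ_cons, Real.exp_add, Real.exp_add]
    ring
  rw [hrw, integral_add, integral_const_mul, integral_const_mul, hn₁ x, hn₂ x]
  · unfold Wfun; ring
  · apply cont_integrable_A
    exact continuous_const.mul ((h₁.comp (continuous_cons x)).rexp)
  · apply cont_integrable_A
    exact continuous_const.mul ((h₂.comp (continuous_cons x)).rexp)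

/-! ### generalized Hölder inequality for the integral -/

lemma integral_prod_rpow_le (p : Measure A) [IsProbabilityMeasure p] {n : ℕ} (hn : 0 < n)
    (f : ℕ → A → ℝ) (hf : ∀ r, Continuous (f r)) (hpos : ∀ r a, 0 < f r a) :
    ∫ a, ∏ r ∈ Finset.range n, (f r a) ^ ((n:ℝ)⁻¹) ∂p
      ≤ ∏ r ∈ Finset.range n, (∫ a, f r a ∂p) ^ ((n:ℝ)⁻¹) := by
  set c : ℝ := (n:ℝ)⁻¹ with hc_def
  have hc : 0 ≤ c := by positivity
  have hmeas : ∀ r ∈ Finset.range n, AEMeasurable (fun a => ENNReal.ofReal (f r a)) p :=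
    fun r _ => (ENNReal.measurable_ofReal.comp (hf r).measurable).aemeasurable
  have hsum : ∑ _r ∈ Finset.range n, c = 1 := by
    rw [Finset.sum_const, Finset.card_range, nsmul_eq_mul, hc_def]
    field_simp
  have key := ENNReal.lintegral_prod_norm_pow_le (Finset.range n) hmeas hsum
    (fun r _ => hc)
  -- identify the Bochner integral with the lintegral
  have hprodpos : ∀ a, 0 ≤ ∏ r ∈ Finset.range n, (f r a) ^ c := by
    intro a
    exact Finset.prod_nonneg fun r _ => Real.rpow_nonneg (hpos r a).le c
  have hmeasP : AEStronglyMeasurable (fun a => ∏ r ∈ Finset.range n, (f r a) ^ c) p := by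
    apply Continuous.aestronglyMeasurable
    apply continuous_finset_prod
    intro r _
    exact (hf r).rpow_const fun a => Or.inl (hpos r a).ne'
  rw [integral_eq_lintegral_of_nonneg_ae (Filter.Eventually.of_forall hprodpos) hmeasP]
  have hofReal : ∀ a, ENNReal.ofReal (∏ r ∈ Finset.range n, (f r a) ^ c)
      = ∏ r ∈ Finset.range n, (ENNReal.ofReal (f r a)) ^ c := by
    intro a
    rw [ENNReal.ofReal_prod_of_nonneg (fun r _ => Real.rpow_nonneg (hpos r a).le c)]
    exact Finset.prod_congr rfl fun r _ => (ENNReal.ofReal_rpow_of_pos (hpos r a)).symm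
  simp_rw [hofReal]
  have hlint : ∀ r, ∫⁻ a, ENNReal.ofReal (f r a) ∂p = ENNReal.ofReal (∫ a, f r a ∂p) := by
    intro r
    rw [← ofReal_integral_eq_lintegral_ofReal (cont_integrable_A _ (hf r) p)
      (Filter.Eventually.of_forall fun a => (hpos r a).le)]
  have hfin : (∏ r ∈ Finset.range n, (∫⁻ a, ENNReal.ofReal (f r a) ∂p) ^ c) ≠ ⊤ := by
    apply (ENNReal.prod_lt_top ?_).ne
    intro r _
    rw [hlint r]
    exact (ENNReal.rpow_ne_top_of_nonneg hc ENNReal.ofReal_ne_top).lt_top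
  refine (ENNReal.toReal_mono hfin key).trans ?_
  rw [ENNReal.toReal_prod]
  apply le_of_eq
  refine Finset.prod_congr rfl fun r _ => ?_
  rw [hlint r, ← ENNReal.toReal_rpow, ENNReal.toReal_ofReal
    (integral_nonneg fun a => (hpos r a).le)]

/-! ### the test function u and sub-invariance -/

def ufun (t s : ℝ) (g₁ g₂ : (ℕ → A) → ℝ) (n : ℕ) (x : ℕ → A) : ℝ :=
  ∏ r ∈ Finset.range n, (Wfun t s g₁ g₂ r x) ^ ((n:ℝ)⁻¹)

def Gfun (t s : ℝ) (g₁ g₂ : (ℕ → A) → ℝ) (n : ℕ) (x : ℕ → A) : ℝ :=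
  (n:ℝ)⁻¹ * Real.log (Wfun t s g₁ g₂ n x)

lemma ufun_pos {t s : ℝ} (ht : 0 < t) (hs : 0 < s) (g₁ g₂ : (ℕ → A) → ℝ) (n : ℕ)
    (x : ℕ → A) : 0 < ufun t s g₁ g₂ n x :=
  Finset.prod_pos fun r _ => Real.rpow_pos_of_pos (Wfun_pos ht hs g₁ g₂ r x) _

lemma continuous_ufun {t s : ℝ} (ht : 0 < t) (hs : 0 < s) {g₁ g₂ : (ℕ → A) → ℝ}
    (h₁ : Continuous g₁) (h₂ : Continuous g₂) (n : ℕ) :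
    Continuous (ufun t s g₁ g₂ n) := by
  unfold ufun
  apply continuous_finset_prod
  intro r _
  exact (continuous_Wfun h₁ h₂ r).rpow_const fun x => Or.inl (Wfun_pos ht hs g₁ g₂ r x).ne'

lemma continuous_Gfun {t s : ℝ} (ht : 0 < t) (hs : 0 < s) {g₁ g₂ : (ℕ → A) → ℝ}
    (h₁ : Continuous g₁) (h₂ : Continuous g₂) (n : ℕ) :
    Continuous (Gfun t s g₁ g₂ n) := by
  unfold Gfun
  exact continuous_const.mul ((continuous_Wfun h₁ h₂ n).log
    fun x => (Wfun_pos ht hs g₁ g₂ n x).ne')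

lemma exp_Gfun {t s : ℝ} (ht : 0 < t) (hs : 0 < s) (g₁ g₂ : (ℕ → A) → ℝ) (n : ℕ)
    (x : ℕ → A) :
    Real.exp (Gfun t s g₁ g₂ n x) = (Wfun t s g₁ g₂ n x) ^ ((n:ℝ)⁻¹) := by
  rw [Real.rpow_def_of_pos (Wfun_pos ht hs g₁ g₂ n x), Gfun, mul_comm]

lemma prod_identity {t s : ℝ} (ht : 0 < t) (hs : 0 < s) (hts : t + s = 1)
    (g₁ g₂ : (ℕ → A) → ℝ) (n : ℕ) (z : ℕ → A) :
    Real.exp (Gfun t s g₁ g₂ n z) * ufun t s g₁ g₂ n z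
      = ∏ r ∈ Finset.range n, (Wfun t s g₁ g₂ (r + 1) z) ^ ((n:ℝ)⁻¹) := by
  have h1 : (∏ r ∈ Finset.range n, (Wfun t s g₁ g₂ (r + 1) z) ^ ((n:ℝ)⁻¹))
      * (Wfun t s g₁ g₂ 0 z) ^ ((n:ℝ)⁻¹)
      = ∏ r ∈ Finset.range (n + 1), (Wfun t s g₁ g₂ r z) ^ ((n:ℝ)⁻¹) :=
    (Finset.prod_range_succ' (fun r => (Wfun t s g₁ g₂ r z) ^ ((n:ℝ)⁻¹)) n).symm
  have h2 : ∏ r ∈ Finset.range (n + 1), (Wfun t s g₁ g₂ r z) ^ ((n:ℝ)⁻¹)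
      = (∏ r ∈ Finset.range n, (Wfun t s g₁ g₂ r z) ^ ((n:ℝ)⁻¹))
        * (Wfun t s g₁ g₂ n z) ^ ((n:ℝ)⁻¹) :=
    Finset.prod_range_succ _ n
  rw [Wfun_zero hts, Real.one_rpow, mul_one] at h1
  rw [exp_Gfun ht hs, h1, h2, ufun]
  ring

lemma ufun_subinv (p : Measure A) [IsProbabilityMeasure p] {t s : ℝ}
    (ht : 0 < t) (hs : 0 < s) (hts : t + s = 1) {g₁ g₂ : (ℕ → A) → ℝ}
    (h₁ : Continuous g₁) (h₂ : Continuous g₂)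
    (hn₁ : ∀ x, ∫ a, Real.exp (g₁ (cons a x)) ∂p = 1)
    (hn₂ : ∀ x, ∫ a, Real.exp (g₂ (cons a x)) ∂p = 1)
    {n : ℕ} (hn : 0 < n) (x : ℕ → A) :
    ∫ a, Real.exp (Gfun t s g₁ g₂ n (cons a x)) * ufun t s g₁ g₂ n (cons a x) ∂p
      ≤ ufun t s g₁ g₂ n x := by
  have hrw : (fun a => Real.exp (Gfun t s g₁ g₂ n (cons a x)) * ufun t s g₁ g₂ n (cons a x))
      = fun a => ∏ r ∈ Finset.range n, (Wfun t s g₁ g₂ (r + 1) (cons a x)) ^ ((n:ℝ)⁻¹) := by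
    funext a
    exact prod_identity ht hs hts g₁ g₂ n (cons a x)
  rw [hrw]
  have hH := integral_prod_rpow_le p hn (fun r a => Wfun t s g₁ g₂ (r + 1) (cons a x))
    (fun r => (continuous_Wfun h₁ h₂ (r + 1)).comp (continuous_cons x))
    (fun r a => Wfun_pos ht hs g₁ g₂ (r + 1) (cons a x))
  refine hH.trans (le_of_eq ?_)
  unfold ufun
  refine Finset.prod_congr rfl fun r _ => ?_
  rw [Wfun_rec p h₁ h₂ hn₁ hn₂ r x]

/-! ### eigenvalue comparison -/

lemma lam_le_one (p : Measure A) [IsProbabilityMeasure p] [Nonempty A] {α : ℝ}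
    (hα0 : 0 < α) {G : (ℕ → A) → ℝ} (hG : IsHolder α G)
    {lamG : ℝ} (hlamG : 0 < lamG) {h : (ℕ → A) → ℝ}
    (hh : IsHolder α h) (hpos : ∀ x, 0 < h x)
    (heq : ∀ x, ruelle p G h x = lamG * h x)
    {u : (ℕ → A) → ℝ} (hu : Continuous u) (hupos : ∀ x, 0 < u x)
    (hsub : ∀ x, ∫ a, Real.exp (G (cons a x)) * u (cons a x) ∂p ≤ u x) :
    lamG ≤ 1 := by
  have hGcont : Continuous G := hG.continuous hα0
  have hhcont : Continuous h := hh.continuous hα0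
  have hφcont : Continuous (fun x => h x / u x) :=
    hhcont.div hu fun x => (hupos x).ne'
  obtain ⟨z, hz⟩ := exists_max _ hφcont
  have hφz : 0 < h z / u z := div_pos (hpos z) (hupos z)
  have key : lamG * h z ≤ h z / u z * u z := by
    have h1 : ruelle p G h z ≤ h z / u z * ∫ a, Real.exp (G (cons a z)) * u (cons a z) ∂p := by
      unfold ruelle
      rw [← integral_const_mul]
      apply integral_mono
      · apply cont_integrable_A
        exact ((hGcont.comp (continuous_cons z)).rexp).mul (hhcont.comp (continuous_cons z))
      · apply cont_integrable_A
        exact continuous_const.mul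
          (((hGcont.comp (continuous_cons z)).rexp).mul (hu.comp (continuous_cons z)))
      · intro a
        have h2 : h (cons a z) ≤ h z / u z * u (cons a z) := by
          have h3 := hz (cons a z)
          rw [div_le_div_iff₀ (hupos _) (hupos z)] at h3
          calc h (cons a z) = h (cons a z) / u (cons a z) * u (cons a z) :=
                (div_mul_cancel₀ _ (hupos (cons a z)).ne').symm
            _ ≤ h z / u z * u (cons a z) := by
                apply mul_le_mul_of_nonneg_right _ (hupos _).le
                rw [div_le_div_iff₀ (hupos _) (hupos z)]
                exact h3
        calc Real.exp (G (cons a z)) * h (cons a z)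
            ≤ Real.exp (G (cons a z)) * (h z / u z * u (cons a z)) :=
              mul_le_mul_of_nonneg_left h2 (Real.exp_pos _).le
          _ = h z / u z * (Real.exp (G (cons a z)) * u (cons a z)) := by ring
    have h4 : h z / u z * ∫ a, Real.exp (G (cons a z)) * u (cons a z) ∂p
        ≤ h z / u z * u z :=
      mul_le_mul_of_nonneg_left (hsub z) hφz.le
    rw [heq z] at h1
    linarith
  have h5 : h z / u z * u z = h z := div_mul_cancel₀ _ (hupos z).ne'
  rw [h5] at key
  have := hpos z
  nlinarith

/-! ### Hölder property of G and pointwise bounds -/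

lemma isHolder_Gfun (hα0 : 0 < α) (hα1 : α < 1) {t s : ℝ} (ht : 0 < t) (hs : 0 < s)
    {g₁ g₂ : (ℕ → A) → ℝ} (hg₁ : IsHolder α g₁) (hg₂ : IsHolder α g₂) (n : ℕ) :
    IsHolder α (Gfun t s g₁ g₂ n) := by
  have h1 : IsHolder α (fun x => Real.log (t * Real.exp (birkhoff n g₁ x)
      + s * Real.exp (birkhoff n g₂ x))) :=
    IsHolder.log_comb ht hs (hg₁.birkhoff hα0.le hα1.le n) (hg₂.birkhoff hα0.le hα1.le n)
  have := h1.mul_const ((n:ℝ)⁻¹)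
  exact this

lemma Gfun_ge₁ {t s : ℝ} (ht : 0 < t) (hs : 0 < s) (g₁ g₂ : (ℕ → A) → ℝ) (n : ℕ)
    (x : ℕ → A) :
    (n:ℝ)⁻¹ * Real.log t + (n:ℝ)⁻¹ * birkhoff n g₁ x ≤ Gfun t s g₁ g₂ n x := by
  have h1 : t * Real.exp (birkhoff n g₁ x) ≤ Wfun t s g₁ g₂ n x := by
    unfold Wfun; nlinarith [Real.exp_pos (birkhoff n g₂ x)]
  have h2 : Real.log (t * Real.exp (birkhoff n g₁ x)) ≤ Real.log (Wfun t s g₁ g₂ n x) :=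
    Real.log_le_log (by positivity) h1
  rw [Real.log_mul ht.ne' (Real.exp_ne_zero _), Real.log_exp] at h2
  unfold Gfun
  have hn0 : (0:ℝ) ≤ (n:ℝ)⁻¹ := by positivity
  nlinarith

lemma Gfun_ge₂ {t s : ℝ} (ht : 0 < t) (hs : 0 < s) (g₁ g₂ : (ℕ → A) → ℝ) (n : ℕ)
    (x : ℕ → A) :
    (n:ℝ)⁻¹ * Real.log s + (n:ℝ)⁻¹ * birkhoff n g₂ x ≤ Gfun t s g₁ g₂ n x := by
  have h1 : s * Real.exp (birkhoff n g₂ x) ≤ Wfun t s g₁ g₂ n x := by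
    unfold Wfun; nlinarith [Real.exp_pos (birkhoff n g₁ x)]
  have h2 : Real.log (s * Real.exp (birkhoff n g₂ x)) ≤ Real.log (Wfun t s g₁ g₂ n x) :=
    Real.log_le_log (by positivity) h1
  rw [Real.log_mul hs.ne' (Real.exp_ne_zero _), Real.log_exp] at h2
  unfold Gfun
  have hn0 : (0:ℝ) ≤ (n:ℝ)⁻¹ := by positivity
  nlinarith

lemma integral_Gfun_ge (μ : Measure (ℕ → A)) [IsProbabilityMeasure μ]
    (hinv : μ.map shift = μ) {t s : ℝ} (ht : 0 < t) (hs : 0 < s)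
    {g : (ℕ → A) → ℝ} (hgc : Continuous g) {n : ℕ} (hn : 0 < n)
    {G : (ℕ → A) → ℝ} (hGc : Continuous G) (c : ℝ)
    (hptwise : ∀ x, (n:ℝ)⁻¹ * c + (n:ℝ)⁻¹ * birkhoff n g x ≤ G x) :
    (n:ℝ)⁻¹ * c + ∫ x, g x ∂μ ≤ ∫ x, G x ∂μ := by
  have h1 : ∫ x, ((n:ℝ)⁻¹ * c + (n:ℝ)⁻¹ * birkhoff n g x) ∂μ ≤ ∫ x, G x ∂μ := by
    apply integral_mono _ (cont_integrable_Omega _ hGc μ) hptwise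
    exact (integrable_const _).add
      ((cont_integrable_Omega _ (continuous_birkhoff hgc n) μ).const_mul _)
  rw [integral_add (integrable_const _)
      ((cont_integrable_Omega _ (continuous_birkhoff hgc n) μ).const_mul _),
    integral_const, integral_const_mul, integral_birkhoff μ hinv g hgc n] at h1
  have hn0 : ((n:ℝ))⁻¹ * ((n:ℝ) * ∫ x, g x ∂μ) = ∫ x, g x ∂μ := by
    have : (n:ℝ) ≠ 0 := Nat.cast_ne_zero.mpr hn.ne'
    field_simp
  rw [hn0] at h1
  simpa [measure_univ] using h1

/-! ### the key estimate -/

lemma key_estimate (p : Measure A) [IsProbabilityMeasure p] [Nonempty A]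
    (hα0 : 0 < α) (hα1 : α < 1)
    {t s : ℝ} (ht : 0 < t) (hs : 0 < s) (hts : t + s = 1)
    {g₁ g₂ : (ℕ → A) → ℝ} (hg₁ : IsHolder α g₁) (hg₂ : IsHolder α g₂)
    (hn₁ : ∀ x, ∫ a, Real.exp (g₁ (cons a x)) ∂p = 1)
    (hn₂ : ∀ x, ∫ a, Real.exp (g₂ (cons a x)) ∂p = 1)
    (lam : ((ℕ → A) → ℝ) → ℝ) (eigf : ((ℕ → A) → ℝ) → ((ℕ → A) → ℝ))
    (hlam : ∀ g, IsHolder α g → 0 < lam g)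
    (heigf : ∀ g, IsHolder α g → IsHolder α (eigf g) ∧ (∀ x, 0 < eigf g x) ∧
      ∀ x, ruelle p g (eigf g) x = lam g * eigf g x)
    {n : ℕ} (hn : 0 < n)
    (μ ν : Measure (ℕ → A)) [IsProbabilityMeasure μ] [IsProbabilityMeasure ν]
    (hμ : μ.map shift = μ) (hν : ν.map shift = ν) :
    -∫ x, Gfun t s g₁ g₂ n x ∂(ENNReal.ofReal t • μ + ENNReal.ofReal s • ν)
      + Real.log (lam (Gfun t s g₁ g₂ n))
    ≤ t * (-∫ x, g₁ x ∂μ) + s * (-∫ x, g₂ x ∂ν)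
      + (n:ℝ)⁻¹ * (-(t * Real.log t + s * Real.log s)) := by
  have hg₁c : Continuous g₁ := hg₁.continuous hα0
  have hg₂c : Continuous g₂ := hg₂.continuous hα0
  set G := Gfun t s g₁ g₂ n with hG_def
  have hGhold : IsHolder α G := isHolder_Gfun hα0 hα1 ht hs hg₁ hg₂ n
  have hGc : Continuous G := hGhold.continuous hα0
  obtain ⟨hGe, hGepos, hGeeq⟩ := heigf G hGhold
  have hlamG : 0 < lam G := hlam G hGhold
  -- log λ_G ≤ 0
  have hlog : Real.log (lam G) ≤ 0 := by
    apply Real.log_nonpos hlamG.le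
    exact lam_le_one p hα0 hGhold hlamG hGe hGepos hGeeq
      (continuous_ufun ht hs hg₁c hg₂c n) (ufun_pos ht hs g₁ g₂ n)
      (fun x => ufun_subinv p ht hs hts hg₁c hg₂c hn₁ hn₂ hn x)
  -- integral over the combined measure
  have hsplit : ∫ x, G x ∂(ENNReal.ofReal t • μ + ENNReal.ofReal s • ν)
      = t * ∫ x, G x ∂μ + s * ∫ x, G x ∂ν := by
    rw [integral_add_measure
      ((cont_integrable_Omega _ hGc μ).smul_measure ENNReal.ofReal_ne_top)
      ((cont_integrable_Omega _ hGc ν).smul_measure ENNReal.ofReal_ne_top),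
      integral_smul_measure, integral_smul_measure,
      ENNReal.toReal_ofReal ht.le, ENNReal.toReal_ofReal hs.le]
    simp [smul_eq_mul]
  have hμbound : (n:ℝ)⁻¹ * Real.log t + ∫ x, g₁ x ∂μ ≤ ∫ x, G x ∂μ :=
    integral_Gfun_ge μ hμ ht hs hg₁c hn hGc (Real.log t) (Gfun_ge₁ ht hs g₁ g₂ n)
  have hνbound : (n:ℝ)⁻¹ * Real.log s + ∫ x, g₂ x ∂ν ≤ ∫ x, G x ∂ν :=
    integral_Gfun_ge ν hν ht hs hg₂c hn hGc (Real.log s) (Gfun_ge₂ ht hs g₁ g₂ n)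
  rw [hsplit]
  have e1 : t * ((n:ℝ)⁻¹ * Real.log t + ∫ x, g₁ x ∂μ) ≤ t * ∫ x, G x ∂μ :=
    mul_le_mul_of_nonneg_left hμbound ht.le
  have e2 : s * ((n:ℝ)⁻¹ * Real.log s + ∫ x, g₂ x ∂ν) ≤ s * ∫ x, G x ∂ν :=
    mul_le_mul_of_nonneg_left hνbound hs.le
  nlinarith [e1, e2, hlog]

/-! ### EReal helper lemmas -/

lemma ereal_le_coe_of_forall_nat (x : EReal) (r K : ℝ)
    (h : ∀ n : ℕ, 0 < n → x ≤ ((r + (n:ℝ)⁻¹ * K : ℝ) : EReal)) : x ≤ (r : EReal) := by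
  induction x using EReal.rec with
  | bot => exact bot_le
  | top =>
      exfalso
      have h1 := h 1 one_pos
      exact absurd (lt_of_le_of_lt h1 (EReal.coe_lt_top _)) (lt_irrefl _)
  | coe y =>
      rw [EReal.coe_le_coe_iff]
      have hlim : Filter.Tendsto (fun n : ℕ => r + (n:ℝ)⁻¹ * K) Filter.atTop (nhds r) := by
        have h1 := tendsto_inv_atTop_nhds_zero_nat.mul_const K
        rw [zero_mul] at h1
        simpa using h1.const_add r
      apply ge_of_tendsto hlim
      filter_upwards [Filter.eventually_gt_atTop 0] with n hn
      exact EReal.coe_le_coe_iff.mp (h n hn)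

lemma ereal_le_coe_of_forall_eps (x : EReal) (r : ℝ)
    (h : ∀ ε : ℝ, 0 < ε → x ≤ ((r + ε : ℝ) : EReal)) : x ≤ (r : EReal) := by
  have h' : ∀ n : ℕ, 0 < n → x ≤ ((r + (n:ℝ)⁻¹ * 1 : ℝ) : EReal) := by
    intro n hn
    exact h ((n:ℝ)⁻¹ * 1) (by positivity)
  exact ereal_le_coe_of_forall_nat x r 1 h'

lemma ereal_eq_bot_of_forall (x : EReal) (h : ∀ r : ℝ, x ≤ (r : EReal)) : x = ⊥ := by
  rw [EReal.eq_bot_iff_forall_lt]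
  intro y
  exact lt_of_le_of_lt (h (y - 1)) (EReal.coe_lt_coe_iff.mpr (by linarith))

/-! ### integral with respect to the convex combination -/

lemma integral_combo {t s : ℝ} (ht : 0 ≤ t) (hs : 0 ≤ s)
    (μ ν : Measure (ℕ → A)) [IsFiniteMeasure μ] [IsFiniteMeasure ν]
    (f : (ℕ → A) → ℝ) (hf : Continuous f) :
    ∫ x, f x ∂(ENNReal.ofReal t • μ + ENNReal.ofReal s • ν)
      = t * ∫ x, f x ∂μ + s * ∫ x, f x ∂ν := by
  rw [integral_add_measure
    ((cont_integrable_Omega _ hf μ).smul_measure ENNReal.ofReal_ne_top)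
    ((cont_integrable_Omega _ hf ν).smul_measure ENNReal.ofReal_ne_top),
    integral_smul_measure, integral_smul_measure,
    ENNReal.toReal_ofReal ht, ENNReal.toReal_ofReal hs]
  simp [smul_eq_mul]

lemma hvEnt_le {lam : ((ℕ → A) → ℝ) → ℝ} (m : Measure (ℕ → A)) {g : (ℕ → A) → ℝ}
    (hg : IsHolder α g) :
    hvEnt α lam m ≤ ((-∫ x, g x ∂m + Real.log (lam g) : ℝ) : EReal) :=
  sInf_le ⟨g, hg, rfl⟩

lemma le_hvEnt {lam : ((ℕ → A) → ℝ) → ℝ} (m : Measure (ℕ → A)) {b : EReal}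
    (h : ∀ g : (ℕ → A) → ℝ, IsHolder α g →
      b ≤ ((-∫ x, g x ∂m + Real.log (lam g) : ℝ) : EReal)) :
    b ≤ hvEnt α lam m := by
  apply le_sInf
  rintro c ⟨g, hg, rfl⟩
  exact h g hg

lemma hvEnt_exists_lt {lam : ((ℕ → A) → ℝ) → ℝ} (m : Measure (ℕ → A)) {c : EReal}
    (h : hvEnt α lam m < c) :
    ∃ g : (ℕ → A) → ℝ, IsHolder α g ∧
      ((-∫ x, g x ∂m + Real.log (lam g) : ℝ) : EReal) < c := by
  obtain ⟨b, ⟨g, hg, rfl⟩, hb⟩ := sInf_lt_iff.mp h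
  exact ⟨g, hg, hb⟩

/-- If to every `α`-Hölder `g` there are assigned `λ_g > 0` and a strictly
positive `α`-Hölder eigenfunction `h_g` with `L_g h_g = λ_g h_g`, then `h^v` is affine on
shift-invariant Borel probability measures:
`h^v(tμ + (1-t)ν) = t h^v(μ) + (1-t) h^v(ν)` for `t ∈ [0,1]`. -/
theorem statement5
    (p : Measure A) [IsProbabilityMeasure p]
    (hsupp : ∀ U : Set A, IsOpen U → U.Nonempty → 0 < p U)
    (α : ℝ) (hα0 : 0 < α) (hα1 : α < 1)
    (lam : ((ℕ → A) → ℝ) → ℝ) (eigf : ((ℕ → A) → ℝ) → ((ℕ → A) → ℝ))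
    (hlam : ∀ g, IsHolder α g → 0 < lam g)
    (heigf : ∀ g, IsHolder α g → IsHolder α (eigf g) ∧ (∀ x, 0 < eigf g x) ∧
      ∀ x, ruelle p g (eigf g) x = lam g * eigf g x)
    (μ ν : Measure (ℕ → A)) [IsProbabilityMeasure μ] [IsProbabilityMeasure ν]
    (hμ : μ.map shift = μ) (hν : ν.map shift = ν)
    (t : ℝ) (ht0 : 0 ≤ t) (ht1 : t ≤ 1) :
    hvEnt α lam (ENNReal.ofReal t • μ + ENNReal.ofReal (1 - t) • ν)
      = ((t : ℝ) : EReal) * hvEnt α lam μ + (((1 - t : ℝ)) : EReal) * hvEnt α lam ν := by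
  haveI : Nonempty A := nonempty_of_prob p
  by_cases ht0' : t = 0
  · subst ht0'
    have hm : ENNReal.ofReal 0 • μ + ENNReal.ofReal (1 - 0) • ν = ν := by
      simp
    rw [hm]
    norm_num
  by_cases ht1' : t = 1
  · subst ht1'
    have hm : ENNReal.ofReal 1 • μ + ENNReal.ofReal (1 - 1) • ν = μ := by
      simp
    rw [hm]
    norm_num
  have ht : 0 < t := lt_of_le_of_ne ht0 (Ne.symm ht0')
  have hs : 0 < 1 - t := by
    rcases lt_or_eq_of_le ht1 with h | h
    · linarith
    · exact absurd h ht1'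
  -- the element of the ν-set given by the zero potential
  set e₁ : ℝ := -∫ x, (fun _ : ℕ → A => (0:ℝ)) x ∂μ + Real.log (lam (fun _ => 0)) with he₁
  set e₂ : ℝ := -∫ x, (fun _ : ℕ → A => (0:ℝ)) x ∂ν + Real.log (lam (fun _ => 0)) with he₂
  have hmem₁ : hvEnt α lam μ ≤ (e₁ : EReal) := hvEnt_le μ (IsHolder.const 0)
  have hmem₂ : hvEnt α lam ν ≤ (e₂ : EReal) := hvEnt_le ν (IsHolder.const 0)
  -- Step 1 : the fundamental inequality
  have step1 : ∀ g₁, IsHolder α g₁ → ∀ g₂, IsHolder α g₂ →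
      hvEnt α lam (ENNReal.ofReal t • μ + ENNReal.ofReal (1 - t) • ν)
        ≤ (((t * (-∫ x, g₁ x ∂μ + Real.log (lam g₁))
            + (1 - t) * (-∫ x, g₂ x ∂ν + Real.log (lam g₂)) : ℝ)) : EReal) := by
    intro g₁ hg₁ g₂ hg₂
    obtain ⟨hh₁, hp₁, he₁'⟩ := heigf g₁ hg₁
    obtain ⟨hh₂, hp₂, he₂'⟩ := heigf g₂ hg₂
    obtain ⟨g₁', hg₁', hnorm₁, hint₁⟩ :=
      normalized_potential p hα0 hα1 lam eigf (hlam g₁ hg₁) hg₁ hh₁ hp₁ he₁'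
    obtain ⟨g₂', hg₂', hnorm₂, hint₂⟩ :=
      normalized_potential p hα0 hα1 lam eigf (hlam g₂ hg₂) hg₂ hh₂ hp₂ he₂'
    have hv₁ : -∫ x, g₁' x ∂μ = -∫ x, g₁ x ∂μ + Real.log (lam g₁) := by
      rw [hint₁ μ inferInstance hμ]; ring
    have hv₂ : -∫ x, g₂' x ∂ν = -∫ x, g₂ x ∂ν + Real.log (lam g₂) := by
      rw [hint₂ ν inferInstance hν]; ring
    apply ereal_le_coe_of_forall_nat _ _
      (-(t * Real.log t + (1 - t) * Real.log (1 - t)))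
    intro n hn
    have hts : t + (1 - t) = 1 := by ring
    have hkey := key_estimate p hα0 hα1 ht hs hts hg₁' hg₂' hnorm₁ hnorm₂ lam eigf hlam
      heigf hn μ ν hμ hν
    refine (hvEnt_le _ (isHolder_Gfun hα0 hα1 ht hs hg₁' hg₂' n)).trans ?_
    rw [EReal.coe_le_coe_iff]
    rw [hv₁, hv₂] at hkey
    nlinarith [hkey]
  -- Step 2 : the easy direction
  apply le_antisymm
  · -- hvEnt ω ≤ t • hvEnt μ + (1-t) • hvEnt ν
    by_cases hbμ : hvEnt α lam μ = ⊥
    · rw [hbμ, EReal.coe_mul_bot_of_pos ht, EReal.bot_add]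
      rw [le_bot_iff]
      apply ereal_eq_bot_of_forall
      intro r
      have hM : hvEnt α lam μ < ((((r - (1 - t) * e₂) / t : ℝ)) : EReal) := by
        rw [hbμ]; exact bot_lt_iff_ne_bot.mpr (by simp)
      obtain ⟨g₁, hg₁, hlt⟩ := hvEnt_exists_lt μ hM
      rw [EReal.coe_lt_coe_iff] at hlt
      refine (step1 g₁ hg₁ _ (IsHolder.const 0)).trans ?_
      rw [EReal.coe_le_coe_iff]
      rw [lt_div_iff₀ ht, he₂] at hlt
      nlinarith
    · have hμne : hvEnt α lam μ ≠ ⊤ :=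
        ne_top_of_le_ne_top (EReal.coe_ne_top e₁) hmem₁
      obtain ⟨rμ, hrμ⟩ : ∃ r : ℝ, hvEnt α lam μ = (r : EReal) :=
        ⟨(hvEnt α lam μ).toReal, (EReal.coe_toReal hμne hbμ).symm⟩
      by_cases hbν : hvEnt α lam ν = ⊥
      · rw [hbν, EReal.coe_mul_bot_of_pos hs, EReal.add_bot]
        rw [le_bot_iff]
        apply ereal_eq_bot_of_forall
        intro r
        have hM : hvEnt α lam ν < ((((r - t * e₁) / (1 - t) : ℝ)) : EReal) := by
          rw [hbν]; exact bot_lt_iff_ne_bot.mpr (by simp)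
        obtain ⟨g₂, hg₂, hlt⟩ := hvEnt_exists_lt ν hM
        rw [EReal.coe_lt_coe_iff] at hlt
        refine (step1 _ (IsHolder.const 0) g₂ hg₂).trans ?_
        rw [EReal.coe_le_coe_iff]
        rw [lt_div_iff₀ hs, he₁] at hlt
        nlinarith
      · have hνne : hvEnt α lam ν ≠ ⊤ :=
          ne_top_of_le_ne_top (EReal.coe_ne_top e₂) hmem₂
        obtain ⟨rν, hrν⟩ : ∃ r : ℝ, hvEnt α lam ν = (r : EReal) :=
          ⟨(hvEnt α lam ν).toReal, (EReal.coe_toReal hνne hbν).symm⟩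
        rw [hrμ, hrν, ← EReal.coe_mul, ← EReal.coe_mul, ← EReal.coe_add]
        apply ereal_le_coe_of_forall_eps
        intro ε hε
        have hM₁ : hvEnt α lam μ < (((rμ + ε / 2 : ℝ)) : EReal) := by
          rw [hrμ]; exact EReal.coe_lt_coe_iff.mpr (by linarith)
        have hM₂ : hvEnt α lam ν < (((rν + ε / 2 : ℝ)) : EReal) := by
          rw [hrν]; exact EReal.coe_lt_coe_iff.mpr (by linarith)
        obtain ⟨g₁, hg₁, hlt₁⟩ := hvEnt_exists_lt μ hM₁
        obtain ⟨g₂, hg₂, hlt₂⟩ := hvEnt_exists_lt ν hM₂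
        rw [EReal.coe_lt_coe_iff] at hlt₁ hlt₂
        refine (step1 g₁ hg₁ g₂ hg₂).trans ?_
        rw [EReal.coe_le_coe_iff]
        nlinarith
  · -- t • hvEnt μ + (1-t) • hvEnt ν ≤ hvEnt ω
    apply le_hvEnt
    intro g hg
    have hgc := hg.continuous hα0
    have hω : -∫ x, g x ∂(ENNReal.ofReal t • μ + ENNReal.ofReal (1 - t) • ν)
        + Real.log (lam g)
        = t * (-∫ x, g x ∂μ + Real.log (lam g))
          + (1 - t) * (-∫ x, g x ∂ν + Real.log (lam g)) := by
      rw [integral_combo ht.le hs.le μ ν g hgc]; ring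
    rw [hω, EReal.coe_add, EReal.coe_mul, EReal.coe_mul]
    apply add_le_add
    · exact mul_le_mul_of_nonneg_left (hvEnt_le μ hg) (EReal.coe_nonneg.mpr ht.le)
    · exact mul_le_mul_of_nonneg_left (hvEnt_le ν hg) (EReal.coe_nonneg.mpr hs.le)

end Paper
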